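/- Let C = {(x,z) ∈ ℝⁿ × ℤ^q : f_i(x,z) ≤ b_i, i = 1,…,m} where the f_i are affine Chvátal functions with binary tree representations of total ceiling count c ≥ 1. Then there exists a system P = {(x,z,z̄) ∈ ℝⁿ × ℤ^q × ℤ : f′_i(x,z,z̄) ≤ b′_i} of affine Chvátal inequalities with total ceiling count at most c − 1 such that C = proj_{(x,z)}(P). -/

import Mathlib

/-- Binary tree representation of an affine Chvátal function. -/
inductive ACTree (n : ℕ) : Type
  | leaf (a : Fin n → ℚ) (c : ℚ)
  | ceil (t : ACTree n)
  | scale (α : NNRat) (t : ACTree n)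
  | add (α β : NNRat) (t₁ t₂ : ACTree n)

namespace ACTree

/-- The affine Chvátal function represented by a tree. -/
noncomputable def eval {n : ℕ} : ACTree n → (Fin n → ℝ) → ℝ
  | leaf a c, x => (∑ i, (a i : ℝ) * x i) + (c : ℝ)
  | ceil t, x => (⌈t.eval x⌉ : ℝ)
  | scale α t, x => (α : ℝ) * t.eval x
  | add α β t₁ t₂, x => (α : ℝ) * t₁.eval x + (β : ℝ) * t₂.eval x

/-- Ceiling count. -/
def cc {n : ℕ} : ACTree n → ℕ
  | leaf _ _ => 0
  | ceil t => t.cc + 1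
  | scale _ t => t.cc
  | add _ _ t₁ t₂ => t₁.cc + t₂.cc

/-- A tree represents a (homogeneous) Chvátal function if all its leaves are
linear (zero constant term). -/
def IsLinear {n : ℕ} : ACTree n → Prop
  | leaf _ c => c = 0
  | ceil t => t.IsLinear
  | scale _ t => t.IsLinear
  | add _ _ t₁ t₂ => t₁.IsLinear ∧ t₂.IsLinear

end ACTree

namespace ACTree

def zero (k : ℕ) : ACTree k := leaf 0 0

@[simp] lemma eval_zero (k : ℕ) (y : Fin k → ℝ) : (zero k).eval y = 0 := by
  simp [zero, eval]

@[simp] lemma cc_zero (k : ℕ) : (zero k).cc = 0 := rfl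

def extend {k : ℕ} : ACTree k → ACTree (k + 1)
  | leaf a c => leaf (Fin.append a (fun _ : Fin 1 => 0)) c
  | ceil t => ceil t.extend
  | scale α t => scale α t.extend
  | add α β t₁ t₂ => add α β t₁.extend t₂.extend

@[simp] lemma cc_extend {k : ℕ} (t : ACTree k) : t.extend.cc = t.cc := by
  induction t with
  | leaf a c => rfl
  | ceil t ih => simp [extend, cc, ih]
  | scale α t ih => simp [extend, cc, ih]
  | add α β t₁ t₂ ih₁ ih₂ => simp [extend, cc, ih₁, ih₂]

@[simp] lemma eval_extend {k : ℕ} (t : ACTree k) (y : Fin k → ℝ) (w : Fin 1 → ℝ) :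
    t.extend.eval (Fin.append y w) = t.eval y := by
  induction t with
  | leaf a c => simp [extend, eval, Fin.sum_univ_add, Fin.append_left, Fin.append_right]
  | ceil t ih => simp [extend, eval, ih]
  | scale α t ih => simp [extend, eval, ih]
  | add α β t₁ t₂ ih₁ ih₂ => simp [extend, eval, ih₁, ih₂]

def lastVar (k : ℕ) (r : ℚ) : ACTree (k + 1) :=
  leaf (Fin.append (0 : Fin k → ℚ) (fun _ : Fin 1 => r)) 0

@[simp] lemma cc_lastVar (k : ℕ) (r : ℚ) : (lastVar k r).cc = 0 := rfl

@[simp] lemma eval_lastVar (k : ℕ) (r : ℚ) (y : Fin k → ℝ) (w : Fin 1 → ℝ) :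
    (lastVar k r).eval (Fin.append y w) = r * w 0 := by
  simp [lastVar, eval, Fin.sum_univ_add, Fin.append_left, Fin.append_right]

@[simp] lemma eval_add {k : ℕ} (α β : NNRat) (t₁ t₂ : ACTree k) (x : Fin k → ℝ) :
    (add α β t₁ t₂).eval x = (α : ℝ) * t₁.eval x + (β : ℝ) * t₂.eval x := rfl

lemma decomp {k : ℕ} (t : ACTree k) (h : 1 ≤ t.cc) :
    (∃ t' : ACTree k, t'.cc < t.cc ∧ ∀ y, t'.eval y = t.eval y) ∨
    (∃ (γ : ℚ) (g₁ g₂ : ACTree k), 0 < γ ∧ g₁.cc + g₂.cc + 1 ≤ t.cc ∧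
      ∀ y, t.eval y = γ * ⌈g₁.eval y⌉ + g₂.eval y) := by
  induction t with
  | leaf a c => simp [cc] at h
  | ceil t ih =>
    right
    exact ⟨1, t, zero k, one_pos, by simp [cc], fun y => by simp [eval]⟩
  | scale α t ih =>
    simp only [cc] at h
    rcases eq_or_lt_of_le (zero_le : (0 : NNRat) ≤ α) with hα | hα
    · left
      exact ⟨zero k, by simp [cc]; omega, fun y => by simp [eval, ← hα]⟩
    · rcases ih h with ⟨t', h1, h2⟩ | ⟨γ, g₁, g₂, hγ, hcc, hev⟩
      · exact Or.inl ⟨scale α t', by simpa [cc], fun y => by simp [eval, h2]⟩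
      · right
        refine ⟨(α : ℚ) * γ, g₁, scale α g₂, ?_, by simpa [cc], fun y => ?_⟩
        · exact mul_pos (by exact_mod_cast hα) hγ
        · simp only [eval, hev y]
          push_cast
          ring
  | add α β t₁ t₂ ih₁ ih₂ =>
    simp only [cc] at h
    by_cases h₁ : 1 ≤ t₁.cc
    · rcases eq_or_lt_of_le (zero_le : (0 : NNRat) ≤ α) with hα | hα
      · left
        refine ⟨add α β (zero k) t₂, by simp [cc]; omega, fun y => by simp [eval, ← hα]⟩
      · rcases ih₁ h₁ with ⟨t', hcc, hev⟩ | ⟨γ, g₁, g₂, hγ, hcc, hev⟩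
        · exact Or.inl ⟨add α β t' t₂, by simp [cc]; omega, fun y => by simp [eval, hev]⟩
        · right
          refine ⟨(α : ℚ) * γ, g₁, add α β g₂ t₂, ?_, by simp [cc]; omega, fun y => ?_⟩
          · exact mul_pos (by exact_mod_cast hα) hγ
          · simp only [eval, hev y]
            push_cast
            ring
    · have h₂ : 1 ≤ t₂.cc := by omega
      rcases eq_or_lt_of_le (zero_le : (0 : NNRat) ≤ β) with hβ | hβ
      · left
        refine ⟨add α β t₁ (zero k), by simp [cc]; omega, fun y => by simp [eval, ← hβ]⟩
      · rcases ih₂ h₂ with ⟨t', hcc, hev⟩ | ⟨γ, g₁, g₂, hγ, hcc, hev⟩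
        · exact Or.inl ⟨add α β t₁ t', by simp [cc]; omega, fun y => by simp [eval, hev]⟩
        · right
          refine ⟨(β : ℚ) * γ, g₁, add α β t₁ g₂, ?_, by simp [cc]; omega, fun y => ?_⟩
          · exact mul_pos (by exact_mod_cast hβ) hγ
          · simp only [eval, hev y]
            push_cast
            ring

end ACTree


/-- a system C = {(x,z) ∈ ℝⁿ × ℤ^q : fᵢ(x,z) ≤ bᵢ} of affine Chvátal
inequalities with total ceiling count c ≥ 1 is the projection of a system
P = {(x,z,z̄) ∈ ℝⁿ × ℤ^q × ℤ : f′ᵢ(x,z,z̄) ≤ b′ᵢ} with total ceiling count ≤ c − 1. -/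
theorem stmt11 {n q m : ℕ} (f : Fin m → ACTree (n + q)) (b : Fin m → ℝ)
    (hc : 1 ≤ ∑ i, (f i).cc) :
    ∃ (m' : ℕ) (f' : Fin m' → ACTree (n + q + 1)) (b' : Fin m' → ℝ),
      (∑ i, (f' i).cc) ≤ (∑ i, (f i).cc) - 1 ∧
      ∀ (x : Fin n → ℝ) (z : Fin q → ℤ),
        (∀ i, (f i).eval (Fin.append x fun j => (z j : ℝ)) ≤ b i) ↔
        ∃ zb : ℤ, ∀ i,
          (f' i).eval (Fin.append (Fin.append x fun j => (z j : ℝ))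
            fun _ : Fin 1 => (zb : ℝ)) ≤ b' i := by
  classical
  have hex : ∃ i₀ : Fin m, 1 ≤ (f i₀).cc := by
    by_contra hne
    push_neg at hne
    have h0 : ∑ i, (f i).cc = 0 :=
      Finset.sum_eq_zero (fun i _ => by have := hne i; omega)
    omega
  obtain ⟨i₀, hi₀⟩ := hex
  rcases ACTree.decomp (f i₀) hi₀ with ⟨t', hcc, hev⟩ | ⟨γ, g₁, g₂, hγ, hcc, hev⟩
  · refine ⟨m, fun i => if i = i₀ then t'.extend else (f i).extend, b, ?_, ?_⟩
    · have hlt : ∑ i, ((fun i => if i = i₀ then t'.extend else (f i).extend) i).cc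
          < ∑ i, (f i).cc := by
        refine Finset.sum_lt_sum (fun i _ => ?_) ⟨i₀, Finset.mem_univ _, ?_⟩
        · by_cases hi : i = i₀ <;> simp [hi, le_of_lt hcc]
        · simpa using hcc
      exact Nat.le_sub_one_of_lt hlt
    · intro x z
      constructor
      · intro H
        refine ⟨0, fun i => ?_⟩
        by_cases hi : i = i₀
        · subst hi
          simpa [ACTree.eval_extend, hev] using H i
        · simpa [hi, ACTree.eval_extend] using H i
      · rintro ⟨zb, H⟩ i
        by_cases hi : i = i₀
        · subst hi
          have h := H i
          simp [ACTree.eval_extend, hev] at h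
          exact h
        · have h := H i
          simpa [hi, ACTree.eval_extend] using h
  · refine ⟨m + 1,
      Fin.snoc (fun j => if j = i₀ then
          ACTree.add 1 1 g₁.extend (ACTree.lastVar (n + q) (-1)) else (f j).extend)
        (ACTree.add 1 1 g₂.extend (ACTree.lastVar (n + q) γ)),
      Fin.snoc (fun j => if j = i₀ then 0 else b j) (b i₀), ?_, ?_⟩
    · rw [Fin.sum_univ_castSucc]
      simp only [Fin.snoc_castSucc, Fin.snoc_last, apply_ite ACTree.cc, ACTree.cc,
        ACTree.cc_extend, ACTree.cc_lastVar, add_zero]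
      have e1 : ∑ j : Fin m, (if j = i₀ then g₁.cc else (f j).cc)
          = g₁.cc + ∑ j ∈ Finset.univ.erase i₀, (f j).cc := by
        rw [← Finset.add_sum_erase _ _ (Finset.mem_univ i₀), if_pos rfl]
        congr 1
        exact Finset.sum_congr rfl fun j hj => if_neg (Finset.ne_of_mem_erase hj)
      have e2 : ∑ j, (f j).cc = (f i₀).cc + ∑ j ∈ Finset.univ.erase i₀, (f j).cc :=
        (Finset.add_sum_erase _ _ (Finset.mem_univ i₀)).symm
      omega
    · intro x z
      set y : Fin (n + q) → ℝ := Fin.append x fun j => (z j : ℝ) with hy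
      have hγR : (0 : ℝ) < (γ : ℝ) := by exact_mod_cast hγ
      constructor
      · intro H
        refine ⟨⌈g₁.eval y⌉, fun i => ?_⟩
        induction i using Fin.lastCases with
        | last =>
          simp only [Fin.snoc_last, ACTree.eval_add, ACTree.eval_extend,
            ACTree.eval_lastVar, NNRat.cast_one, one_mul]
          have h := H i₀
          rw [hev y] at h
          linarith
        | cast j =>
          simp only [Fin.snoc_castSucc]
          by_cases hj : j = i₀
          · subst hj
            simp
            have := Int.le_ceil (g₁.eval y)
            linarith
          · simpa [hj, ACTree.eval_extend] using H j
      · rintro ⟨zb, H⟩ i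
        by_cases hi : i = i₀
        · subst hi
          have h1 := H (Fin.castSucc i)
          have h2 := H (Fin.last m)
          simp at h1 h2
          rw [hev y]
          have hle : g₁.eval y ≤ (zb : ℝ) := by linarith
          have hceil : (⌈g₁.eval y⌉ : ℝ) ≤ (zb : ℝ) := by
            exact_mod_cast Int.ceil_le.mpr hle
          nlinarith
        · have h := H (Fin.castSucc i)
          simp only [Fin.snoc_castSucc, if_neg hi, ACTree.eval_extend] at h
          exact h
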